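/- Let n ≥ 2 be an integer, t > 0, and let ν be a Borel measure on [0,∞) with ν([0,u]) ≤ (e·u/(n−1))^{n−1} for all u > 0. Then t^{n−1} · ∫_{[0,∞)} |n − 1 − t u| e^{−t u} ν(du) ≤ t^n · ∫_0^∞ ν([0,s]) · |n − t s| e^{−t s} ds. More precisely, the left-hand side equals t^n ∫_0^∞ ν([0,s]) |n − ts| e^{−ts} ds − 2 t^n ∫_{(n−1)/t}^{n/t} ν([0,s]) (n − ts) e^{−ts} ds, and the subtracted term is nonnegative. -/

import Mathlib

open MeasureTheory
open scoped ENNReal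

set_option maxHeartbeats 1000000

section IBPAux
open Set Filter

namespace IBP

lemma hasDerivAt_G (t N : ℝ) (ht : t ≠ 0) (x : ℝ) :
    HasDerivAt (fun x => (N - 1 - t * x) * Real.exp (-t * x) / t)
      ((t * x - N) * Real.exp (-t * x)) x := by
  have h1 : HasDerivAt (fun x : ℝ => -t * x) (-t) x := by
    simpa using (hasDerivAt_id x).const_mul (-t)
  have h2 : HasDerivAt (fun x : ℝ => Real.exp (-t * x)) (Real.exp (-t * x) * -t) x := h1.exp
  have h3 : HasDerivAt (fun x : ℝ => N - 1 - t * x) (-t) x := by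
    simpa using ((hasDerivAt_id x).const_mul t).const_sub (N - 1)
  have h4 := (h3.mul h2).div_const t
  refine h4.congr_deriv ?_
  rw [div_eq_iff ht]
  ring

lemma tendsto_G (t N : ℝ) (ht : 0 < t) :
    Tendsto (fun x => (N - 1 - t * x) * Real.exp (-t * x) / t) atTop (nhds 0) := by
  have base : Tendsto (fun y : ℝ => (N - 1 - y) * Real.exp (-y)) atTop (nhds 0) := by
    have h1 := (Real.tendsto_exp_neg_atTop_nhds_zero).const_mul (N - 1)
    have h2 := Real.tendsto_pow_mul_exp_neg_atTop_nhds_zero 1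
    have h3 := h1.sub h2
    rw [mul_zero, sub_zero] at h3
    refine h3.congr fun y => ?_
    simp [sub_mul, pow_one]
  have hcomp : Tendsto (fun x : ℝ => t * x) atTop atTop :=
    Tendsto.const_mul_atTop ht tendsto_id
  have := (base.comp hcomp).div_const t
  rw [zero_div] at this
  refine this.congr fun x => ?_
  simp [Function.comp, neg_mul]

end IBP

namespace IBP

lemma tail_lintegral (t N u : ℝ) (ht : 0 < t) (hu : N / t ≤ u) :
    ∫⁻ s in Set.Ioi u, ENNReal.ofReal (|N - t * s| * Real.exp (-t * s))
      = ENNReal.ofReal ((t * u - (N - 1)) * Real.exp (-t * u) / t) := by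
  have htu : N ≤ t * u := by
    rw [div_le_iff₀ ht] at hu; linarith [hu]
  have hderiv : ∀ x ∈ Set.Ici u, HasDerivAt (fun x => (N - 1 - t * x) * Real.exp (-t * x) / t)
      ((t * x - N) * Real.exp (-t * x)) x := fun x _ => hasDerivAt_G t N ht.ne' x
  have hnonneg : ∀ x ∈ Set.Ioi u, 0 ≤ (t * x - N) * Real.exp (-t * x) := by
    intro x hx
    have hx' : u < x := hx
    have : N ≤ t * x := le_trans htu (by nlinarith)
    exact mul_nonneg (by linarith) (Real.exp_pos _).le
  have hint : IntegrableOn (fun x => (t * x - N) * Real.exp (-t * x)) (Set.Ioi u) :=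
    integrableOn_Ioi_deriv_of_nonneg' hderiv hnonneg (tendsto_G t N ht)
  have hval : ∫ x in Set.Ioi u, (t * x - N) * Real.exp (-t * x)
      = 0 - (N - 1 - t * u) * Real.exp (-t * u) / t :=
    integral_Ioi_of_hasDerivAt_of_nonneg' hderiv hnonneg (tendsto_G t N ht)
  have hcong : ∫⁻ s in Set.Ioi u, ENNReal.ofReal (|N - t * s| * Real.exp (-t * s))
      = ∫⁻ s in Set.Ioi u, ENNReal.ofReal ((t * s - N) * Real.exp (-t * s)) := by
    refine setLIntegral_congr_fun measurableSet_Ioi (fun s hs => ?_)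
    have hs' : u < s := hs
    have hNs : N - t * s ≤ 0 := by nlinarith
    rw [abs_of_nonpos hNs]
    ring_nf
  rw [hcong, ← ofReal_integral_eq_lintegral_ofReal hint
    ((ae_restrict_iff' measurableSet_Ioi).2 (ae_of_all _ hnonneg)), hval]
  congr 1
  ring

lemma seg_lintegral (t N u v : ℝ) (ht : 0 < t) (huv : u ≤ v) (hv : t * v ≤ N) :
    ∫⁻ s in Set.Ioc u v, ENNReal.ofReal ((N - t * s) * Real.exp (-t * s))
      = ENNReal.ofReal (((N - 1 - t * u) * Real.exp (-t * u)
          - (N - 1 - t * v) * Real.exp (-t * v)) / t) := by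
  have hnonneg : ∀ x ∈ Set.Ioc u v, 0 ≤ (N - t * x) * Real.exp (-t * x) := by
    intro x hx
    have h1 : x ≤ v := hx.2
    have : t * x ≤ N := le_trans (by nlinarith) hv
    exact mul_nonneg (by linarith) (Real.exp_pos _).le
  have hderiv : ∀ x ∈ Set.uIcc u v,
      HasDerivAt (fun x => -((N - 1 - t * x) * Real.exp (-t * x) / t))
        ((N - t * x) * Real.exp (-t * x)) x := by
    intro x _
    have := (hasDerivAt_G t N ht.ne' x).neg
    exact this.congr_deriv (by ring)
  have hcont : Continuous fun x : ℝ => (N - t * x) * Real.exp (-t * x) := by fun_prop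
  have hftc := intervalIntegral.integral_eq_sub_of_hasDerivAt hderiv
    (hcont.intervalIntegrable u v)
  rw [intervalIntegral.integral_of_le huv] at hftc
  have hint : IntegrableOn (fun x => (N - t * x) * Real.exp (-t * x)) (Set.Ioc u v) :=
    hcont.integrableOn_Ioc
  rw [← ofReal_integral_eq_lintegral_ofReal hint
    ((ae_restrict_iff' measurableSet_Ioc).2 (ae_of_all _ hnonneg)), hftc]
  congr 1
  ring

end IBP

namespace IBP

lemma key_pointwise (n : ℕ) (hn : 2 ≤ n) (t : ℝ) (ht : 0 < t) (u : ℝ) (hu : 0 ≤ u) :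
    ENNReal.ofReal (t ^ (n - 1)) * ENNReal.ofReal (|(n : ℝ) - 1 - t * u| * Real.exp (-t * u))
      + 2 * ENNReal.ofReal (t ^ n) *
        ∫⁻ s in Set.Ioc (max (((n : ℝ) - 1) / t) u) ((n : ℝ) / t),
          ENNReal.ofReal (((n : ℝ) - t * s) * Real.exp (-t * s))
      = ENNReal.ofReal (t ^ n) *
        ∫⁻ s in Set.Ioi u, ENNReal.ofReal (|(n : ℝ) - t * s| * Real.exp (-t * s)) := by
  have hN : 2 ≤ (n : ℝ) := by exact_mod_cast hn
  set N : ℝ := (n : ℝ) with hNdef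
  set a : ℝ := (N - 1) / t with hadef
  set b : ℝ := N / t with hbdef
  have hta : t * a = N - 1 := by rw [hadef]; field_simp
  have htb : t * b = N := by rw [hbdef]; field_simp
  have hab : a ≤ b := by nlinarith
  have hpow : t ^ n = t ^ (n - 1) * t := by
    rw [← pow_succ]; congr 1; omega
  have hP1 : (0:ℝ) ≤ t ^ (n - 1) := by positivity
  have hP : (0:ℝ) ≤ t ^ n := by positivity
  have h2 : (2 : ℝ≥0∞) = ENNReal.ofReal 2 := by norm_num
  rcases lt_or_ge b u with hbu | hub
  · -- u > b : middle term empty, tail only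
    have hmax : max a u = u := max_eq_right (le_of_lt (lt_of_le_of_lt hab hbu))
    rw [hmax, Set.Ioc_eq_empty (not_lt.mpr hbu.le), Measure.restrict_empty,
      lintegral_zero_measure, mul_zero, add_zero,
      tail_lintegral t N u ht (le_of_lt hbu)]
    have habs : |N - 1 - t * u| = t * u - (N - 1) := by
      have : t * b < t * u := by nlinarith
      rw [abs_of_nonpos (by nlinarith)]; ring
    rw [habs, ← ENNReal.ofReal_mul hP1, ← ENNReal.ofReal_mul hP]
    congr 1
    rw [hpow]; field_simp
  · -- u ≤ b
    rw [← Set.Ioc_union_Ioi_eq_Ioi hub,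
      lintegral_union measurableSet_Ioi (Set.Ioc_disjoint_Ioi le_rfl)]
    have hcong : ∫⁻ s in Set.Ioc u b, ENNReal.ofReal (|N - t * s| * Real.exp (-t * s))
        = ∫⁻ s in Set.Ioc u b, ENNReal.ofReal ((N - t * s) * Real.exp (-t * s)) := by
      refine setLIntegral_congr_fun measurableSet_Ioc (fun s hs => ?_)
      have hsb : s ≤ b := hs.2
      have : t * s ≤ N := by nlinarith
      rw [abs_of_nonneg (by linarith)]
    rw [hcong, seg_lintegral t N u b ht hub (le_of_eq htb),
      tail_lintegral t N b ht le_rfl]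
    have eb : N - 1 - t * b = -1 := by rw [htb]; ring
    have ebb : t * b - (N - 1) = 1 := by rw [htb]; ring
    rcases le_or_gt u a with hua | hau
    · -- u ≤ a
      have hmax : max a u = a := max_eq_left hua
      rw [hmax, seg_lintegral t N a b ht hab (le_of_eq htb)]
      have habs : |N - 1 - t * u| = N - 1 - t * u := by
        have : t * u ≤ t * a := by nlinarith
        rw [abs_of_nonneg (by nlinarith)]
      have ea : N - 1 - t * a = 0 := by rw [hta]; ring
      rw [habs, eb, ea, ebb]
      have hm1 : (0:ℝ) ≤ (0 * Real.exp (-t * a) - -1 * Real.exp (-t * b)) / t := by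
        have h3 := Real.exp_pos (-t * b)
        apply div_nonneg _ ht.le; nlinarith
      have hr1 : (0:ℝ) ≤ ((N - 1 - t * u) * Real.exp (-t * u) - -1 * Real.exp (-t * b)) / t := by
        have h3 := Real.exp_pos (-t * b)
        have h4 := Real.exp_pos (-t * u)
        have h5 : 0 ≤ N - 1 - t * u := by nlinarith
        apply div_nonneg _ ht.le; nlinarith
      have hr2 : (0:ℝ) ≤ 1 * Real.exp (-t * b) / t := by
        have := Real.exp_pos (-t * b); positivity
      rw [← ENNReal.ofReal_mul hP1, h2, ← ENNReal.ofReal_mul (by norm_num : (0:ℝ) ≤ 2),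
        ← ENNReal.ofReal_mul (by positivity : (0:ℝ) ≤ 2 * t ^ n),
        ← ENNReal.ofReal_add hr1 hr2, ← ENNReal.ofReal_mul hP,
        ← ENNReal.ofReal_add (mul_nonneg hP1 (mul_nonneg
            (by nlinarith [mul_nonneg ht.le (sub_nonneg.mpr hua)] : (0:ℝ) ≤ N - 1 - t * u)
            (Real.exp_pos (-t * u)).le))
          (mul_nonneg (by positivity) hm1)]
      congr 1
      rw [hpow]; field_simp; ring
    · -- a < u ≤ b
      have hmax : max a u = u := max_eq_right hau.le
      rw [hmax, seg_lintegral t N u b ht hub (le_of_eq htb)]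
      have habs : |N - 1 - t * u| = -(N - 1 - t * u) := by
        have : t * a < t * u := by nlinarith
        rw [abs_of_neg (by nlinarith)]
      have hexp : (t * u - (N - 1)) * Real.exp (-t * u) ≤ Real.exp (-t * b) := by
        have h1 : t * u - (N - 1) ≤ Real.exp (t * u - N) := by
          linarith [Real.add_one_le_exp (t * u - N)]
        have h3 : Real.exp (t * u - N) * Real.exp (-t * u) = Real.exp (-t * b) := by
          rw [← Real.exp_add]; congr 1
          rw [neg_mul, neg_mul, htb]; ring
        nlinarith [Real.exp_pos (-t * u),
          mul_le_mul_of_nonneg_right h1 (Real.exp_pos (-t * u)).le]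
      rw [eb, ebb, habs]
      have hm1 : (0:ℝ) ≤ ((N - 1 - t * u) * Real.exp (-t * u) - -1 * Real.exp (-t * b)) / t := by
        apply div_nonneg _ ht.le; nlinarith
      have hr2 : (0:ℝ) ≤ 1 * Real.exp (-t * b) / t := by
        have := Real.exp_pos (-t * b); positivity
      rw [← ENNReal.ofReal_mul hP1, h2, ← ENNReal.ofReal_mul (by norm_num : (0:ℝ) ≤ 2),
        ← ENNReal.ofReal_mul (by positivity : (0:ℝ) ≤ 2 * t ^ n),
        ← ENNReal.ofReal_add hm1 hr2, ← ENNReal.ofReal_mul hP,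
        ← ENNReal.ofReal_add (mul_nonneg hP1 (mul_nonneg
            (by nlinarith [mul_le_mul_of_nonneg_left hau.le ht.le] : (0:ℝ) ≤ -(N - 1 - t * u))
            (Real.exp_pos (-t * u)).le)) (mul_nonneg (by positivity) hm1)]
      congr 1
      rw [hpow]; field_simp; ring

end IBP

namespace IBP

lemma swap_lemma (ν : Measure ℝ) [SigmaFinite ν] (hNeg : ν (Set.Iio 0) = 0)
    (S : Set ℝ) (hS : MeasurableSet S) (g : ℝ → ℝ≥0∞) (hg : Measurable g) :
    ∫⁻ s in S, ν (Set.Icc 0 s) * g s = ∫⁻ u, (∫⁻ s in Set.Ici u ∩ S, g s) ∂ν := by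
  have hae : ∀ᵐ u ∂ν, 0 ≤ u := by
    rw [ae_iff]
    convert hNeg using 2
    ext x; simp [not_le]
  set f : ℝ → ℝ → ℝ≥0∞ := fun s u => (Set.Icc 0 s).indicator (fun _ => g s) u with hf
  have hmeas : Measurable (Function.uncurry f) := by
    have heq : Function.uncurry f =
        Set.indicator {p : ℝ × ℝ | 0 ≤ p.2 ∧ p.2 ≤ p.1} (fun p => g p.1) := by
      ext ⟨s, u⟩
      by_cases h : 0 ≤ u ∧ u ≤ s
      · simp [Function.uncurry, hf, Set.indicator_apply, Set.mem_Icc, h, Set.mem_setOf_eq]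
      · simp [Function.uncurry, hf, Set.indicator_apply, Set.mem_Icc, h, Set.mem_setOf_eq]
    rw [heq]
    exact ((hg.comp measurable_fst).indicator
      ((measurableSet_le measurable_const measurable_snd).inter
        (measurableSet_le measurable_snd measurable_fst)))
  have step1 : ∫⁻ s in S, ν (Set.Icc 0 s) * g s = ∫⁻ s in S, ∫⁻ u, f s u ∂ν := by
    refine lintegral_congr fun s => ?_
    simp only [hf]
    rw [lintegral_indicator measurableSet_Icc, setLIntegral_const, mul_comm]
  rw [step1, lintegral_lintegral_swap hmeas.aemeasurable]
  refine lintegral_congr_ae ?_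
  filter_upwards [hae] with u hu
  have hfu : ∀ s, f s u = (Set.Ici u).indicator g s := by
    intro s
    by_cases h : u ≤ s
    · simp [hf, Set.indicator_apply, Set.mem_Icc, Set.mem_Ici, h, hu]
    · simp [hf, Set.indicator_apply, Set.mem_Icc, Set.mem_Ici, h, hu]
  simp_rw [hfu]
  rw [lintegral_indicator measurableSet_Ici, Measure.restrict_restrict measurableSet_Ici]

lemma aeeq1 (u : ℝ) (hu : 0 ≤ u) :
    (Set.Ici u ∩ Set.Ioi (0 : ℝ) : Set ℝ) =ᵐ[volume] (Set.Ioi u : Set ℝ) := by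
  refine (MeasureTheory.ae_eq_set).2 ⟨?_, ?_⟩
  · refine measure_mono_null (fun x hx => ?_) (Real.volume_singleton (a := u))
    rcases hx with ⟨⟨h1, _⟩, h3⟩
    simp only [Set.mem_Ioi, not_lt] at h3
    exact Set.mem_singleton_iff.2 (le_antisymm h3 h1)
  · have : (Set.Ioi u \ (Set.Ici u ∩ Set.Ioi (0:ℝ)) : Set ℝ) = ∅ :=
      Set.diff_eq_empty.2 (fun x hx => ⟨show u ≤ x from le_of_lt hx, lt_of_le_of_lt hu hx⟩)
    rw [this]; exact measure_empty

lemma aeeq2 (a b u : ℝ) :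
    (Set.Ici u ∩ Set.Ioc a b : Set ℝ) =ᵐ[volume] (Set.Ioc (max a u) b : Set ℝ) := by
  refine (MeasureTheory.ae_eq_set).2 ⟨?_, ?_⟩
  · refine measure_mono_null (fun x hx => ?_) (Real.volume_singleton (a := u))
    rcases hx with ⟨⟨h1, h2, h3⟩, h4⟩
    simp only [Set.mem_Ioc, not_and, not_le, max_lt_iff] at h4
    refine Set.mem_singleton_iff.2 (le_antisymm ?_ h1)
    by_contra hcon
    push_neg at hcon
    exact absurd h3 (not_le.mpr (h4 ⟨h2, hcon⟩))
  · have : (Set.Ioc (max a u) b \ (Set.Ici u ∩ Set.Ioc a b) : Set ℝ) = ∅ :=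
      Set.diff_eq_empty.2 (fun x hx => ⟨le_of_lt (lt_of_le_of_lt (le_max_right a u) hx.1),
        lt_of_le_of_lt (le_max_left a u) hx.1, hx.2⟩)
    rw [this]; exact measure_empty

end IBP


end IBPAux

/-- Integration-by-parts identity and bound (display (9.10) of the paper): for a Borel
measure `ν` on `[0,∞)` with `ν([0,u]) ≤ (e u/(n-1))^{n-1}`, for `n ≥ 2` and `t > 0`,
`t^{n-1} ∫ |n-1-tu| e^{-tu} ν(du) ≤ t^n ∫_0^∞ ν([0,s]) |n-ts| e^{-ts} ds`; more precisely,
the left-hand side plus `2 t^n ∫_{(n-1)/t}^{n/t} ν([0,s]) (n-ts) e^{-ts} ds` (a nonnegative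
quantity) equals the right-hand side. -/
theorem integration_by_parts_bound (n : ℕ) (hn : 2 ≤ n) (t : ℝ) (ht : 0 < t)
    (ν : Measure ℝ) (hNeg : ν (Set.Iio 0) = 0)
    (hbound : ∀ u : ℝ, 0 < u →
      ν (Set.Icc 0 u) ≤ ENNReal.ofReal ((Real.exp 1 * u / ((n : ℝ) - 1)) ^ (n - 1))) :
    (ENNReal.ofReal (t ^ (n - 1)) *
        ∫⁻ u, ENNReal.ofReal (|(n : ℝ) - 1 - t * u| * Real.exp (-t * u)) ∂ν)
      ≤ ENNReal.ofReal (t ^ n) *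
          ∫⁻ s in Set.Ioi (0 : ℝ),
            ν (Set.Icc 0 s) * ENNReal.ofReal (|(n : ℝ) - t * s| * Real.exp (-t * s)) ∧
    (ENNReal.ofReal (t ^ (n - 1)) *
        ∫⁻ u, ENNReal.ofReal (|(n : ℝ) - 1 - t * u| * Real.exp (-t * u)) ∂ν)
      + 2 * ENNReal.ofReal (t ^ n) *
          (∫⁻ s in Set.Ioc (((n : ℝ) - 1) / t) ((n : ℝ) / t),
            ν (Set.Icc 0 s) * ENNReal.ofReal (((n : ℝ) - t * s) * Real.exp (-t * s)))
      = ENNReal.ofReal (t ^ n) *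
          ∫⁻ s in Set.Ioi (0 : ℝ),
            ν (Set.Icc 0 s) * ENNReal.ofReal (|(n : ℝ) - t * s| * Real.exp (-t * s)) := by
  haveI hsf : SigmaFinite ν := by
    refine ⟨⟨⟨fun k => Set.Iic (k : ℝ), fun _ => trivial, fun k => ?_, ?_⟩⟩⟩
    · calc ν (Set.Iic (k : ℝ))
          ≤ ν (Set.Iio 0 ∪ Set.Icc 0 ((k : ℝ) + 1)) := by
            refine measure_mono fun x hx => ?_
            rcases lt_or_ge x 0 with h | h
            · exact Or.inl h
            · exact Or.inr ⟨h, le_trans hx (by linarith)⟩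
      _ ≤ ν (Set.Iio 0) + ν (Set.Icc 0 ((k : ℝ) + 1)) := measure_union_le _ _
      _ = ν (Set.Icc 0 ((k : ℝ) + 1)) := by rw [hNeg, zero_add]
      _ ≤ ENNReal.ofReal ((Real.exp 1 * ((k : ℝ) + 1) / ((n : ℝ) - 1)) ^ (n - 1)) :=
            hbound _ (by positivity)
      _ < ⊤ := ENNReal.ofReal_lt_top
    · rw [Set.iUnion_eq_univ_iff]
      intro x
      obtain ⟨k, hk⟩ := exists_nat_ge x
      exact ⟨k, hk⟩
  have hae : ∀ᵐ u ∂ν, 0 ≤ u := by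
    rw [ae_iff]
    convert hNeg using 2
    ext x; simp [not_le]
  have hg1 : Measurable fun s : ℝ => ENNReal.ofReal (|(n : ℝ) - t * s| * Real.exp (-t * s)) := by
    fun_prop
  have hg2 : Measurable fun s : ℝ => ENNReal.ofReal (((n : ℝ) - t * s) * Real.exp (-t * s)) := by
    fun_prop
  have hR : (∫⁻ s in Set.Ioi (0 : ℝ),
        ν (Set.Icc 0 s) * ENNReal.ofReal (|(n : ℝ) - t * s| * Real.exp (-t * s)))
      = ∫⁻ u, (∫⁻ s in Set.Ioi u,
          ENNReal.ofReal (|(n : ℝ) - t * s| * Real.exp (-t * s))) ∂ν := by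
    refine (IBP.swap_lemma ν hNeg (Set.Ioi 0) measurableSet_Ioi _ hg1).trans ?_
    refine lintegral_congr_ae ?_
    filter_upwards [hae] with u hu
    exact setLIntegral_congr (IBP.aeeq1 u hu)
  have hM : (∫⁻ s in Set.Ioc (((n : ℝ) - 1) / t) ((n : ℝ) / t),
        ν (Set.Icc 0 s) * ENNReal.ofReal (((n : ℝ) - t * s) * Real.exp (-t * s)))
      = ∫⁻ u, (∫⁻ s in Set.Ioc (max (((n : ℝ) - 1) / t) u) ((n : ℝ) / t),
          ENNReal.ofReal (((n : ℝ) - t * s) * Real.exp (-t * s))) ∂ν := by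
    refine (IBP.swap_lemma ν hNeg _ measurableSet_Ioc _ hg2).trans ?_
    refine lintegral_congr_ae (ae_of_all _ fun u => ?_)
    exact setLIntegral_congr (IBP.aeeq2 _ _ u)
  have hmeasA : Measurable fun u : ℝ => ENNReal.ofReal (t ^ (n - 1)) *
      ENNReal.ofReal (|(n : ℝ) - 1 - t * u| * Real.exp (-t * u)) := by
    fun_prop
  have key : (ENNReal.ofReal (t ^ (n - 1)) *
        ∫⁻ u, ENNReal.ofReal (|(n : ℝ) - 1 - t * u| * Real.exp (-t * u)) ∂ν)
      + 2 * ENNReal.ofReal (t ^ n) *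
          (∫⁻ s in Set.Ioc (((n : ℝ) - 1) / t) ((n : ℝ) / t),
            ν (Set.Icc 0 s) * ENNReal.ofReal (((n : ℝ) - t * s) * Real.exp (-t * s)))
      = ENNReal.ofReal (t ^ n) *
          ∫⁻ s in Set.Ioi (0 : ℝ),
            ν (Set.Icc 0 s) * ENNReal.ofReal (|(n : ℝ) - t * s| * Real.exp (-t * s)) := by
    rw [hR, hM,
      ← lintegral_const_mul' (ENNReal.ofReal (t ^ (n - 1))) _ ENNReal.ofReal_ne_top,
      ← lintegral_const_mul' (2 * ENNReal.ofReal (t ^ n)) _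
        (ENNReal.mul_ne_top (by simp) ENNReal.ofReal_ne_top),
      ← lintegral_const_mul' (ENNReal.ofReal (t ^ n)) _ ENNReal.ofReal_ne_top,
      ← lintegral_add_left hmeasA]
    refine lintegral_congr_ae ?_
    filter_upwards [hae] with u hu
    exact IBP.key_pointwise n hn t ht u hu
  exact ⟨key ▸ le_self_add, key⟩
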